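/- arXiv:1711.10509 — 2 statements merged into one kernel-verified Lean document; each statement's English description precedes it below -/
import Mathlib

section
/- Let k ≥ 1 and 0 ≤ j ≤ k−1. Then N(k+1,j)·D² = N(k,j−1)²·D + N(k,j)·N(k,k−1)² in F₂[x_1,…,x_k], where N(k,j−1) is interpreted as 0 when j = 0. (Equivalently, in terms of the quotient polynomials p_{ℓ,j} = N(ℓ,j)/D and Dickson invariants c_j = p_{k,j}: p_{k+1,j} = c_{j−1}² + c_j·c_{k−1}².) -/
open MvPolynomial Matrix

/-- `Vdm k t` is the determinant of the `k × k` matrix whose `(i, j)` entry is `xᵢ ^ t j`,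
in `F₂[x₁, …, x_k]`. -/
noncomputable def Vdm (k : ℕ) (t : Fin k → ℕ) : MvPolynomial (Fin k) (ZMod 2) :=
  Matrix.det (Matrix.of fun i j : Fin k => (X i : MvPolynomial (Fin k) (ZMod 2)) ^ t j)

/-- `D k = V(2^0, 2^1, …, 2^(k-1))`. -/
noncomputable def D (k : ℕ) : MvPolynomial (Fin k) (ZMod 2) :=
  Vdm k fun j => 2 ^ (j : ℕ)

/-- `N k ℓ j` is the Vandermonde determinant whose exponent tuple lists the 2-powers
`2^0, …, 2^(k-1)` with `2^j` omitted, followed by `2^ℓ`. -/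
noncomputable def N (k ℓ j : ℕ) : MvPolynomial (Fin k) (ZMod 2) :=
  Vdm k fun i =>
    if (i : ℕ) + 1 < k then (if (i : ℕ) < j then 2 ^ (i : ℕ) else 2 ^ ((i : ℕ) + 1))
    else 2 ^ ℓ

/- `G k m` is the sum of all monomials of total degree `m` in `x₁, …, x_k` in which
every nonzero exponent is a power of 2. -/
open Classical in
noncomputable def G (k m : ℕ) : MvPolynomial (Fin k) (ZMod 2) :=
  ∑ d : Fin k → Fin (m + 1),
    if (∑ i, (d i : ℕ)) = m ∧ ∀ i, (d i : ℕ) ≠ 0 → ∃ e, (d i : ℕ) = 2 ^ e then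
      ∏ i, (X i : MvPolynomial (Fin k) (ZMod 2)) ^ (d i : ℕ)
    else 0

abbrev Rk (k : ℕ) := MvPolynomial (Fin k) (ZMod 2)

lemma succAbove_val {k : ℕ} (p : Fin (k+1)) (d : Fin k) :
    ((p.succAbove d : Fin (k+1)) : ℕ) = if (d:ℕ) < (p:ℕ) then (d:ℕ) else (d:ℕ)+1 := by
  rw [Fin.succAbove]
  split_ifs with h h' h'' <;> simp_all [Fin.lt_def]

lemma key (k : ℕ) (i : Fin k) :
    D k * X i ^ 2 ^ k = ∑ m : Fin k, N k k (m : ℕ) * X i ^ 2 ^ (m : ℕ) := by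
  set g : Fin (k+1) → Fin k := fun r => if h : (r : ℕ) < k then ⟨r, h⟩ else i with hg
  set M : Matrix (Fin (k+1)) (Fin (k+1)) (Rk k) :=
    Matrix.of fun r c => (X (g r) : Rk k) ^ 2 ^ (c : ℕ) with hM
  have hgc : ∀ r : Fin k, g r.castSucc = r := by
    intro r; simp [hg, r.is_lt]
  have hdet0 : M.det = 0 := by
    apply Matrix.det_zero_of_row_eq (i := (i.castSucc : Fin (k+1))) (j := Fin.last k)
    · exact (Fin.castSucc_lt_last i).ne
    · funext c
      have h1 : g i.castSucc = i := by simp [hg, Fin.is_lt]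
      have h2 : g (Fin.last k) = i := by simp [hg]
      simp [hM, h1, h2]
  have hexp := Matrix.det_succ_row M (Fin.last k)
  rw [hdet0] at hexp
  have hneg : ∀ n : ℕ, ((-1 : Rk k)) ^ n = 1 := by
    intro n; rw [CharTwo.neg_eq 1, one_pow]
  simp only [hneg, one_mul] at hexp
  rw [Fin.sum_univ_castSucc] at hexp
  -- identify the last term
  have hlastrow : ∀ c : Fin (k+1), M (Fin.last k) c = X i ^ 2 ^ (c : ℕ) := by
    intro c; simp [hM, hg]
  have hlastterm :
      M (Fin.last k) (Fin.last k) *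
        (M.submatrix (Fin.last k).succAbove ((Fin.last k).succAbove)).det
      = X i ^ 2 ^ k * D k := by
    have hD : (M.submatrix (Fin.last k).succAbove ((Fin.last k).succAbove)).det = D k := by
      rw [D, Vdm]
      congr 1
      ext r d
      simp [hM, Fin.succAbove_last, hgc]
    rw [hlastrow, hD, Fin.val_last]
  have hterm : ∀ c : Fin k,
      M (Fin.last k) c.castSucc *
        (M.submatrix (Fin.last k).succAbove (c.castSucc.succAbove)).det
      = N k k (c : ℕ) * X i ^ 2 ^ (c : ℕ) := by
    intro c
    rw [hlastrow, mul_comm]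
    congr 1
    rw [N, Vdm]
    congr 1
    ext r d
    have hv : ((c.castSucc.succAbove d : Fin (k+1)) : ℕ)
        = if (d:ℕ) + 1 < k then (if (d:ℕ) < (c:ℕ) then (d:ℕ) else (d:ℕ)+1) else k := by
      rw [succAbove_val]
      have hd := d.is_lt
      have hc := c.is_lt
      simp only [Fin.coe_castSucc]
      split_ifs <;> omega
    simp only [Matrix.submatrix_apply, hM, Matrix.of_apply, Fin.succAbove_last, hgc, hv]
    split_ifs <;> rfl
  rw [hlastterm] at hexp
  rw [Finset.sum_congr rfl fun c _ => hterm c] at hexp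
  have h2 : (∑ m : Fin k, N k k (m:ℕ) * X i ^ 2 ^ (m:ℕ)) + X i ^ 2 ^ k * D k = 0 := hexp.symm
  rw [mul_comm]
  calc X i ^ 2 ^ k * D k
      = (∑ m : Fin k, N k k (m:ℕ) * X i ^ 2 ^ (m:ℕ))
        + ((∑ m : Fin k, N k k (m:ℕ) * X i ^ 2 ^ (m:ℕ)) + X i ^ 2 ^ k * D k) := by
        rw [← add_assoc, CharTwo.add_self_eq_zero, zero_add]
    _ = ∑ m : Fin k, N k k (m:ℕ) * X i ^ 2 ^ (m:ℕ) := by rw [h2, add_zero]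

lemma key2 (k : ℕ) (i : Fin k) :
    D k ^ 2 * X i ^ 2 ^ (k+1) = ∑ m : Fin k, N k k (m : ℕ) ^ 2 * X i ^ 2 ^ ((m : ℕ)+1) := by
  have h2 : (D k * X i ^ 2 ^ k) ^ 2
      = (∑ m : Fin k, N k k (m:ℕ) * X i ^ 2 ^ (m:ℕ)) ^ 2 := by rw [key k i]
  rw [sum_pow_char 2] at h2
  simp only [mul_pow, ← pow_mul, ← pow_succ] at h2
  exact h2

lemma det_updateColumn_sum' {n α : Type*} [DecidableEq n] [Fintype n] {S : Type*} [CommRing S]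
    (M : Matrix n n S) (j : n) (s : Finset α) (u : α → n → S) :
    (M.updateCol j (fun i => ∑ a ∈ s, u a i)).det
      = ∑ a ∈ s, (M.updateCol j (u a)).det := by
  induction s using Finset.cons_induction with
  | empty =>
    simp only [Finset.sum_empty]
    have h0 : (fun _ : n => (0:S)) = (0 : S) • (fun _ : n => (1:S)) := by funext; simp
    rw [h0, Matrix.det_updateCol_smul, zero_mul]
  | cons a s ha ih =>
    simp only [Finset.sum_cons]
    have hadd : (fun i => u a i + ∑ b ∈ s, u b i)
        = (u a) + (fun i => ∑ b ∈ s, u b i) := rfl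
    rw [hadd, Matrix.det_updateCol_add, ih]

theorem stmt16 (k j : ℕ) (hk : 1 ≤ k) (hj : j ≤ k - 1) :
    N k (k + 1) j * D k ^ 2 =
      (if 1 ≤ j then N k k (j - 1) ^ 2 * D k else 0) +
        N k k j * N k k (k - 1) ^ 2 := by
  obtain ⟨k', rfl⟩ : ∃ k', k = k' + 1 := ⟨k - 1, by omega⟩
  simp only [Nat.add_sub_cancel] at hj ⊢
  set K := k' + 1 with hK
  set L : Fin K := Fin.last k' with hL
  set A : Matrix (Fin K) (Fin K) (Rk K) :=
    Matrix.of fun i c => X i ^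
      (if (c:ℕ) + 1 < K then (if (c:ℕ) < j then 2 ^ (c:ℕ) else 2 ^ ((c:ℕ)+1)) else 2 ^ 0)
    with hA
  have hAentry : ∀ (r : Fin K) (c : Fin K), (c:ℕ) ≠ k' →
      A r c = X r ^ (if (c:ℕ) < j then 2 ^ (c:ℕ) else 2 ^ ((c:ℕ)+1)) := by
    intro r c hc
    have h1 : (c:ℕ) + 1 < K := by have := c.is_lt; omega
    simp [hA, h1]
  have hupd : ∀ ℓ : ℕ, A.updateCol L (fun i => X i ^ 2 ^ ℓ)
      = Matrix.of (fun i c : Fin K => (X i : Rk K) ^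
        (if (c:ℕ) + 1 < K then (if (c:ℕ) < j then 2 ^ (c:ℕ) else 2 ^ ((c:ℕ)+1)) else 2 ^ ℓ)) := by
    intro ℓ
    ext r c
    by_cases hc : c = L
    · subst hc
      rw [Matrix.updateCol_self]
      simp [hL, show ¬ (k' + 1 < K) by omega]
    · have hcv : (c:ℕ) ≠ k' := fun h => hc (Fin.ext (by simp [hL, h]))
      have h1 : (c:ℕ) + 1 < K := by have := c.is_lt; omega
      rw [Matrix.updateCol_ne hc]
      simp [hA, h1]
  have hN : ∀ ℓ : ℕ, N K ℓ j = (A.updateCol L (fun i => X i ^ 2 ^ ℓ)).det := by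
    intro ℓ; rw [hupd ℓ]; rfl
  -- value of each summand determinant
  have hval : ∀ m : Fin K, (A.updateCol L (fun i => X i ^ 2 ^ ((m:ℕ)+1))).det
      = if (m:ℕ) = k' then N K K j else if (m:ℕ) + 1 = j then D K else 0 := by
    intro m
    by_cases hm : (m:ℕ) = k'
    · rw [if_pos hm, show (m:ℕ) + 1 = K from by omega]
      exact (hN K).symm
    · rw [if_neg hm]
      have hmlt : (m:ℕ) < k' := by have := m.is_lt; omega
      by_cases hmj : (m:ℕ) + 1 = j
      · -- permutation case : det = D K
        rw [if_pos hmj]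
        have hj1 : 1 ≤ j := by omega
        set f : Fin K → Fin K := fun c =>
          if h : (c:ℕ) + 1 < K then
            (if (c:ℕ) < j then ⟨(c:ℕ), c.is_lt⟩ else ⟨(c:ℕ)+1, h⟩)
          else ⟨j, by omega⟩ with hf
        have hfval : ∀ c : Fin K, ((f c : Fin K) : ℕ)
            = if (c:ℕ) + 1 < K then (if (c:ℕ) < j then (c:ℕ) else (c:ℕ)+1) else j := by
          intro c; rw [hf]; dsimp only; split_ifs <;> rfl
        have hinj : Function.Injective f := by
          intro a b hab
          have ha := a.is_lt; have hb := b.is_lt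
          have hv := congrArg Fin.val hab
          rw [hfval a, hfval b] at hv
          split_ifs at hv <;> (apply Fin.ext; omega)
        have hbij : Function.Bijective f := Finite.injective_iff_bijective.mp hinj
        set e : Equiv.Perm (Fin K) := Equiv.ofBijective f hbij with he
        set Dmat : Matrix (Fin K) (Fin K) (Rk K) :=
          Matrix.of fun i c => X i ^ 2 ^ (c:ℕ) with hDmat
        have hB : A.updateCol L (fun i => X i ^ 2 ^ ((m:ℕ)+1))
            = Dmat.submatrix id e := by
          refine Matrix.ext fun r c => ?_
          have hec : (e c : Fin K) = f c := rfl
          rw [Matrix.submatrix_apply, hec]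
          by_cases hc : c = L
          · subst hc
            rw [Matrix.updateCol_self]
            have hfL : f L = ⟨j, by omega⟩ := by simp [hf, hL, show ¬ (k' + 1 < K) by omega]
            rw [hfL]
            show X r ^ 2 ^ ((m:ℕ)+1) = X r ^ 2 ^ j
            rw [hmj]
          · have hcv : (c:ℕ) ≠ k' := fun h => hc (Fin.ext (by simp [hL, h]))
            have h1 : (c:ℕ) + 1 < K := by have := c.is_lt; omega
            rw [Matrix.updateCol_ne hc, hAentry r c hcv]
            have hfc : f c = if (c:ℕ) < j then (⟨(c:ℕ), c.is_lt⟩ : Fin K) else ⟨(c:ℕ)+1, h1⟩ := by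
              simp [hf, h1]
            rw [hfc]
            split_ifs <;> rfl
        rw [hB, Matrix.det_permute']
        have hDK : Dmat.det = D K := rfl
        rw [hDK]
        rcases Int.units_eq_one_or (Equiv.Perm.sign e) with h | h <;>
          rw [h] <;> simp [CharTwo.neg_eq]
      · -- zero case
        rw [if_neg hmj]
        set c₀ : Fin K := if h : (m:ℕ) + 1 < j then ⟨(m:ℕ)+1, by omega⟩ else ⟨(m:ℕ), by omega⟩
          with hc₀
        have hc₀v : (c₀:ℕ) = (m:ℕ) + 1 ∨ (c₀:ℕ) = (m:ℕ) := by
          rw [hc₀]; split_ifs <;> simp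
        have hc₀ne : c₀ ≠ L := by
          intro h
          have := congrArg Fin.val h
          simp only [hL, Fin.val_last] at this
          rw [hc₀] at this
          split_ifs at this <;> simp at this <;> omega
        apply Matrix.det_zero_of_column_eq hc₀ne
        intro r
        rw [Matrix.updateCol_ne hc₀ne, Matrix.updateCol_self]
        have hcc : (c₀:ℕ) ≠ k' := by
          rw [hc₀]; split_ifs <;> simp <;> omega
        rw [hAentry r c₀ hcc]
        rw [hc₀]
        split_ifs with h1 h2 h3 <;> simp_all <;> omega
  -- the main computation
  have hsmul : (fun i : Fin K => D K ^ 2 * X i ^ 2 ^ (K+1))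
      = (D K ^ 2) • (fun i : Fin K => X i ^ 2 ^ (K+1)) := rfl
  calc N K (K + 1) j * D K ^ 2
      = D K ^ 2 * (A.updateCol L (fun i => X i ^ 2 ^ (K+1))).det := by
        rw [mul_comm, hN (K+1)]
    _ = (A.updateCol L ((D K ^ 2) • fun i : Fin K => X i ^ 2 ^ (K+1))).det := by
        rw [Matrix.det_updateCol_smul]
    _ = (A.updateCol L (fun i : Fin K => ∑ m : Fin K,
          N K K (m:ℕ) ^ 2 * X i ^ 2 ^ ((m:ℕ)+1))).det := by
        have hcol : (D K ^ 2) • (fun i : Fin K => (X i : Rk K) ^ 2 ^ (K+1))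
            = fun i : Fin K => ∑ m : Fin K, N K K (m:ℕ) ^ 2 * X i ^ 2 ^ ((m:ℕ)+1) := by
          funext i
          rw [← key2 K i]
          rfl
        rw [hcol]
    _ = ∑ m : Fin K, (A.updateCol L
          (fun i => N K K (m:ℕ) ^ 2 * X i ^ 2 ^ ((m:ℕ)+1))).det := by
        rw [det_updateColumn_sum']
    _ = ∑ m : Fin K, N K K (m:ℕ) ^ 2 * (A.updateCol L
          (fun i => X i ^ 2 ^ ((m:ℕ)+1))).det := by
        refine Finset.sum_congr rfl fun m _ => ?_
        have : (fun i => N K K (m:ℕ) ^ 2 * X i ^ 2 ^ ((m:ℕ)+1))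
            = (N K K (m:ℕ) ^ 2) • (fun i : Fin K => X i ^ 2 ^ ((m:ℕ)+1)) := rfl
        rw [this, Matrix.det_updateCol_smul]
    _ = ∑ m : Fin K, N K K (m:ℕ) ^ 2 *
          (if (m:ℕ) = k' then N K K j else if (m:ℕ) + 1 = j then D K else 0) := by
        refine Finset.sum_congr rfl fun m _ => by rw [hval m]
    _ = (if 1 ≤ j then N K K (j - 1) ^ 2 * D K else 0) + N K K j * N K K k' ^ 2 := by
        rw [Fin.sum_univ_castSucc]
        have hlast : ((Fin.last k' : Fin K) : ℕ) = k' := rfl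
        rw [hlast, if_pos rfl]
        congr 1
        · have hterm : ∀ m : Fin k',
              N K K ((m.castSucc : Fin K):ℕ) ^ 2 *
                (if ((m.castSucc : Fin K):ℕ) = k' then N K K j
                  else if ((m.castSucc : Fin K):ℕ) + 1 = j then D K else 0)
              = if (m:ℕ) + 1 = j then N K K (m:ℕ) ^ 2 * D K else 0 := by
            intro m
            have hmv : ((m.castSucc : Fin K):ℕ) = (m:ℕ) := rfl
            have hne : (m:ℕ) ≠ k' := by have := m.is_lt; omega
            rw [hmv, if_neg hne, mul_ite, mul_zero]
          rw [Finset.sum_congr rfl fun m _ => hterm m]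
          by_cases hj1 : 1 ≤ j
          · rw [if_pos hj1]
            have hjk : j - 1 < k' := by omega
            rw [Finset.sum_eq_single (⟨j-1, hjk⟩ : Fin k')]
            · rw [if_pos (show ((⟨j-1, hjk⟩ : Fin k') : ℕ) + 1 = j from by
                show j - 1 + 1 = j; omega)]
            · intro b _ hb
              rw [if_neg]
              intro hb'
              exact hb (Fin.ext (show (b:ℕ) = j - 1 from by omega))
            · intro h; exact absurd (Finset.mem_univ _) h
          · rw [if_neg hj1]
            apply Finset.sum_eq_zero
            intro m _
            rw [if_neg (by omega)]
        · rw [mul_comm]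
end

section
/- Let k ≥ 2 and 0 ≤ j ≤ k−1. Then N(k+2,j)·D⁶ = N(k,j)·N(k,k−2)⁴·D² + N(k,j)·N(k,k−1)⁶ + N(k,j−1)²·N(k,k−1)⁴·D + N(k,j−2)⁴·D³ in F₂[x_1,…,x_k], where N(k,j−1) is interpreted as 0 when j = 0 and N(k,j−2) as 0 when j ≤ 1. (Equivalently, in terms of the quotient polynomials p_{ℓ,j} = N(ℓ,j)/D and Dickson invariants c_j = p_{k,j}: p_{k+2,j} = c_j·c_{k−2}⁴ + c_j·c_{k−1}⁶ + c_{j−1}²·c_{k−1}⁴ + c_{j−2}⁴.) -/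
open MvPolynomial

lemma lemA (k ℓ : ℕ) (hk : 0 < k) (i : Fin k) :
    D k * X i ^ 2 ^ ℓ = ∑ c : Fin k, N k ℓ (c : ℕ) * X i ^ 2 ^ (c : ℕ) := by
  obtain ⟨m, rfl⟩ : ∃ m, k = m + 1 := ⟨k - 1, by omega⟩
  set R := MvPolynomial (Fin (m + 1)) (ZMod 2)
  set e : Fin (m + 2) → ℕ := fun c => if (c : ℕ) < m + 1 then (c : ℕ) else ℓ with he
  set v : Fin (m + 2) → R := fun r => if h : (r : ℕ) < m + 1 then X ⟨r, h⟩ else X i with hv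
  set M : Matrix (Fin (m + 2)) (Fin (m + 2)) R := Matrix.of fun r c => v r ^ 2 ^ e c with hM
  have hrow : M (Fin.castSucc i) = M (Fin.last (m + 1)) := by
    funext c
    have h1 : v (Fin.castSucc i) = X i := by
      simp only [hv, Fin.coe_castSucc, dif_pos i.isLt]
    have h2 : v (Fin.last (m + 1)) = X i := by
      simp [hv]
    simp only [hM, Matrix.of_apply, h1, h2]
  have hdet : M.det = 0 :=
    Matrix.det_zero_of_row_eq (by
      intro h
      have := congrArg Fin.val h
      simp [Fin.val_last] at this
      omega) hrow
  have hexp : M.det = ∑ c : Fin (m + 2),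
      (-1 : R) ^ ((Fin.last (m+1) : ℕ) + (c : ℕ)) * M (Fin.last (m+1)) c *
        (M.submatrix (Fin.last (m+1)).succAbove c.succAbove).det :=
    Matrix.det_succ_row M (Fin.last (m+1))
  have hneg : (-1 : R) = 1 := by
    have := CharTwo.neg_eq (1 : R)
    simpa using this
  have hsucc : ∀ (b : Fin (m + 1)) (c' : Fin (m + 1)),
      (((Fin.castSucc b).succAbove c' : Fin (m + 2)) : ℕ) =
        if (c' : ℕ) < (b : ℕ) then (c' : ℕ) else (c' : ℕ) + 1 := by
    intro b c'
    rw [Fin.succAbove]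
    split_ifs with h1 h2 h3
    · rfl
    · exact absurd (by exact_mod_cast Fin.castSucc_lt_castSucc_iff.mp h1) h2
    · exact absurd (Fin.castSucc_lt_castSucc_iff.mpr (by exact_mod_cast h3)) h1
    · rfl
  have hsubN : ∀ b : Fin (m + 1),
      (M.submatrix (Fin.last (m+1)).succAbove (Fin.castSucc b).succAbove).det
        = N (m + 1) ℓ (b : ℕ) := by
    intro b
    rw [N, Vdm]
    congr 1
    rw [Fin.succAbove_last]
    ext r c'
    have h1 : v (Fin.castSucc r) = X r := by
      simp only [hv, Fin.coe_castSucc, dif_pos r.isLt]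
    have h2 : (2 : ℕ) ^ e ((Fin.castSucc b).succAbove c') =
        (if (c' : ℕ) + 1 < m + 1 then
          (if (c' : ℕ) < (b : ℕ) then 2 ^ (c' : ℕ) else 2 ^ ((c' : ℕ) + 1))
         else 2 ^ ℓ) := by
      have hb := b.isLt
      have hc := c'.isLt
      simp only [he, hsucc b c']
      split_ifs <;> first | rfl | (congr 1; omega) | (exfalso; omega)
    simp only [Matrix.submatrix_apply, hM, Matrix.of_apply, h1, h2]
  have hsubD : (M.submatrix (Fin.last (m+1)).succAbove (Fin.last (m+1)).succAbove).det
      = D (m + 1) := by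
    rw [D, Vdm]
    congr 1
    rw [Fin.succAbove_last]
    ext r c'
    have h1 : v (Fin.castSucc r) = X r := by
      simp only [hv, Fin.coe_castSucc, dif_pos r.isLt]
    have h2 : e (Fin.castSucc c') = (c' : ℕ) := by
      simp only [he, Fin.coe_castSucc, if_pos c'.isLt]
    simp only [Matrix.submatrix_apply, hM, Matrix.of_apply, h1, h2]
  have hlast : M (Fin.last (m+1)) = fun c => X i ^ 2 ^ e c := by
    funext c
    have h2 : v (Fin.last (m + 1)) = X i := by simp [hv]
    simp only [hM, Matrix.of_apply, h2]
  rw [hexp, hneg, Fin.sum_univ_castSucc] at hdet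
  simp only [one_pow, one_mul, hlast, hsubD, hsubN] at hdet
  have helast : e (Fin.last (m + 1)) = ℓ := by simp [he]
  have hecast : ∀ b : Fin (m + 1), e (Fin.castSucc b) = (b : ℕ) := fun b => by
    simp only [he, Fin.coe_castSucc, if_pos b.isLt]
  rw [helast] at hdet
  rw [CharTwo.add_eq_iff_eq_add, eq_comm, zero_add] at hdet
  rw [mul_comm, hdet]
  exact Finset.sum_congr rfl fun b _ => by rw [hecast b, mul_comm]


lemma prodX (k : ℕ) (d : Fin k → ℕ) :
    (∏ c : Fin k, (X c : MvPolynomial (Fin k) (ZMod 2)) ^ d c)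
      = monomial (∑ c : Fin k, Finsupp.single c (d c)) 1 := by
  classical
  simp only [X_pow_eq_monomial]
  rw [Finset.prod_congr rfl (fun c _ => rfl : ∀ c ∈ Finset.univ, _ = _)]
  induction (Finset.univ : Finset (Fin k)) using Finset.induction with
  | empty => simp
  | insert _ _ h ih =>
      rw [Finset.prod_insert h, Finset.sum_insert h, ih, monomial_mul, mul_one]

lemma Dne (k : ℕ) : D k ≠ 0 := by
  classical
  set m0 : (Fin k) →₀ ℕ := ∑ c : Fin k, Finsupp.single c (2 ^ (c : ℕ)) with hm0
  have hm0app : ∀ p : Fin k, m0 p = 2 ^ (p : ℕ) := by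
    intro p
    rw [hm0, Finset.sum_apply']
    simp [Finsupp.single_apply]
  have hcoeff : coeff m0 (D k) = 1 := by
    rw [D, Vdm, Matrix.det_apply]
    have hsmul : ∀ (σ : Equiv.Perm (Fin k)) (x : MvPolynomial (Fin k) (ZMod 2)),
        Equiv.Perm.sign σ • x = x := by
      intro σ x
      rcases Int.units_eq_one_or (Equiv.Perm.sign σ) with h | h <;>
        simp [h, Units.smul_def, CharTwo.neg_eq]
    simp only [hsmul, Matrix.of_apply]
    have hterm : ∀ σ : Equiv.Perm (Fin k),
        (∏ c : Fin k, (X (σ c) : MvPolynomial (Fin k) (ZMod 2)) ^ 2 ^ (c : ℕ))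
          = monomial (∑ c : Fin k, Finsupp.single c (2 ^ ((σ⁻¹ c : Fin k) : ℕ))) 1 := by
      intro σ
      rw [← prodX]
      rw [← Equiv.prod_comp σ (fun c => (X c : MvPolynomial (Fin k) (ZMod 2)) ^ 2 ^ ((σ⁻¹ c : Fin k) : ℕ))]
      simp
    rw [MvPolynomial.coeff_sum]
    simp only [hterm, coeff_monomial]
    have hiff : ∀ σ : Equiv.Perm (Fin k),
        ((∑ c : Fin k, Finsupp.single c (2 ^ ((σ⁻¹ c : Fin k) : ℕ))) = m0) ↔ σ = 1 := by
      intro σ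
      constructor
      · intro h
        have hp : ∀ p : Fin k, (σ⁻¹ p : Fin k) = p := by
          intro p
          have := congrArg (fun f => f p) h
          simp only [Finset.sum_apply'] at this
          rw [hm0app] at this
          simp only [Finsupp.single_apply] at this
          simp at this
          exact Fin.ext this
        ext p
        have := hp (σ p); simp at this
        rw [← this]; simp
      · intro h; subst h; ext p; rw [hm0app]; simp [Finset.sum_apply', Finsupp.single_apply]
    simp only [hiff]
    rw [Finset.sum_ite_eq' Finset.univ (1 : Equiv.Perm (Fin k))]
    simp
  intro h
  rw [h] at hcoeff
  simp at hcoeff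

lemma lemB (k : ℕ) (f : Fin k → MvPolynomial (Fin k) (ZMod 2))
    (hf : ∀ i : Fin k, (∑ c : Fin k, (X i : MvPolynomial (Fin k) (ZMod 2)) ^ 2 ^ (c : ℕ) * f c) = 0) :
    ∀ c, f c = 0 := by
  classical
  set V : Matrix (Fin k) (Fin k) (MvPolynomial (Fin k) (ZMod 2)) :=
    Matrix.of fun i c => (X i : MvPolynomial (Fin k) (ZMod 2)) ^ 2 ^ (c : ℕ) with hV
  have h1 : V.mulVec f = 0 := by
    funext i
    exact hf i
  have h2 : V.det • f = 0 := by
    calc V.det • f = (V.det • (1 : Matrix (Fin k) (Fin k) _)).mulVec f := by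
          rw [Matrix.smul_mulVec, Matrix.one_mulVec]
      _ = (V.adjugate * V).mulVec f := by rw [Matrix.adjugate_mul]
      _ = V.adjugate.mulVec (V.mulVec f) := (Matrix.mulVec_mulVec f _ _).symm
      _ = 0 := by rw [h1, Matrix.mulVec_zero]
  intro c
  have h3 : V.det * f c = 0 := congrFun h2 c
  have hD : V.det = D k := rfl
  rcases mul_eq_zero.mp h3 with h | h
  · exact absurd (hD ▸ h) (Dne k)
  · exact h

lemma shiftSum (k : ℕ) (hk : 1 ≤ k) (g : ℕ → MvPolynomial (Fin k) (ZMod 2))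
    (x : MvPolynomial (Fin k) (ZMod 2)) :
    ∑ c ∈ Finset.range k, g c * x ^ 2 ^ (c + 1) =
      (∑ c ∈ Finset.range k, (if 1 ≤ c then g (c - 1) else 0) * x ^ 2 ^ c) +
        g (k - 1) * x ^ 2 ^ k := by
  have e1 := Finset.sum_range_succ' (fun c => (if 1 ≤ c then g (c - 1) else 0) * x ^ 2 ^ c) k
  have e2 := Finset.sum_range_succ (fun c => (if 1 ≤ c then g (c - 1) else 0) * x ^ 2 ^ c) k
  rw [e2] at e1
  simp only [Nat.le_zero, if_neg (by omega : ¬ 1 ≤ 0), zero_mul, add_zero,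
    if_pos hk, Nat.add_sub_cancel] at e1
  rw [e1]
  simp

lemma sqMul {k : ℕ} (a x : MvPolynomial (Fin k) (ZMod 2)) (ℓ : ℕ) :
    (a * x ^ 2 ^ ℓ) ^ 2 = a ^ 2 * x ^ 2 ^ (ℓ + 1) := by
  rw [mul_pow, ← pow_mul, ← pow_succ]

lemma sqSum {k m : ℕ} (f : ℕ → MvPolynomial (Fin k) (ZMod 2))
    (x : MvPolynomial (Fin k) (ZMod 2)) :
    (∑ c ∈ Finset.range m, f c * x ^ 2 ^ c) ^ 2 =
      ∑ c ∈ Finset.range m, f c ^ 2 * x ^ 2 ^ (c + 1) := by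
  rw [CharTwo.sum_sq]
  exact Finset.sum_congr rfl fun c _ => sqMul _ _ _

set_option maxHeartbeats 1000000 in
theorem stmt17 (k j : ℕ) (hk : 2 ≤ k) (hj : j ≤ k - 1) :
    N k (k + 2) j * D k ^ 6 =
      N k k j * N k k (k - 2) ^ 4 * D k ^ 2 +
        N k k j * N k k (k - 1) ^ 6 +
        (if 1 ≤ j then N k k (j - 1) ^ 2 * N k k (k - 1) ^ 4 * D k else 0) +
        (if 2 ≤ j then N k k (j - 2) ^ 4 * D k ^ 3 else 0) := by
  classical
  have hk1 : 0 < k := by omega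
  set n : ℕ → MvPolynomial (Fin k) (ZMod 2) := fun c => N k k c with hn
  set hc : ℕ → MvPolynomial (Fin k) (ZMod 2) :=
    fun c => D k * (if 1 ≤ c then n (c - 1) ^ 2 else 0) + n (k - 1) ^ 2 * n c with hh
  have key := lemB k (fun c => D k ^ 6 * N k (k + 2) (c : ℕ) +
      (D k * (if 1 ≤ (c : ℕ) then hc ((c : ℕ) - 1) ^ 2 else 0) + hc (k - 1) ^ 2 * n (c : ℕ))) ?hf
  case hf =>
    intro i
    set x : MvPolynomial (Fin k) (ZMod 2) := X i with hx
    -- part A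
    have hA : ∑ c : Fin k, x ^ 2 ^ (c : ℕ) * (D k ^ 6 * N k (k + 2) (c : ℕ)) =
        D k ^ 7 * x ^ 2 ^ (k + 2) := by
      calc ∑ c : Fin k, x ^ 2 ^ (c : ℕ) * (D k ^ 6 * N k (k + 2) (c : ℕ))
          = D k ^ 6 * ∑ c : Fin k, N k (k + 2) (c : ℕ) * x ^ 2 ^ (c : ℕ) := by
            rw [Finset.mul_sum]; exact Finset.sum_congr rfl fun c _ => by ring
        _ = D k ^ 6 * (D k * x ^ 2 ^ (k + 2)) := by rw [← lemA k (k + 2) hk1 i]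
        _ = D k ^ 7 * x ^ 2 ^ (k + 2) := by ring
    -- chain for part B
    have s1 : D k * x ^ 2 ^ k = ∑ c ∈ Finset.range k, n c * x ^ 2 ^ c := by
      rw [← Fin.sum_univ_eq_sum_range (fun c => n c * x ^ 2 ^ c) k]
      exact lemA k k hk1 i
    have s2 : D k ^ 2 * x ^ 2 ^ (k + 1) =
        ∑ c ∈ Finset.range k, n c ^ 2 * x ^ 2 ^ (c + 1) := by
      have h := congrArg (· ^ 2) s1
      rwa [sqMul, sqSum] at h
    have s4 : D k ^ 3 * x ^ 2 ^ (k + 1) = ∑ c ∈ Finset.range k, hc c * x ^ 2 ^ c := by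
      calc D k ^ 3 * x ^ 2 ^ (k + 1) = D k * (D k ^ 2 * x ^ 2 ^ (k + 1)) := by ring
        _ = D k * (∑ c ∈ Finset.range k, (if 1 ≤ c then n (c - 1) ^ 2 else 0) * x ^ 2 ^ c)
            + n (k - 1) ^ 2 * (D k * x ^ 2 ^ k) := by
            rw [s2, shiftSum k (by omega) (fun c => n c ^ 2) x]; ring
        _ = ∑ c ∈ Finset.range k, hc c * x ^ 2 ^ c := by
            rw [s1, Finset.mul_sum, Finset.mul_sum, ← Finset.sum_add_distrib]
            exact Finset.sum_congr rfl fun c _ => by simp only [hh]; ring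
    have s5 : D k ^ 6 * x ^ 2 ^ (k + 2) =
        ∑ c ∈ Finset.range k, hc c ^ 2 * x ^ 2 ^ (c + 1) := by
      have h := congrArg (· ^ 2) s4
      rw [sqMul, sqSum] at h
      calc D k ^ 6 * x ^ 2 ^ (k + 2) = (D k ^ 3) ^ 2 * x ^ 2 ^ (k + 1 + 1) := by ring_nf
        _ = _ := h
    have s7 : D k ^ 7 * x ^ 2 ^ (k + 2) = ∑ c ∈ Finset.range k,
        (D k * (if 1 ≤ c then hc (c - 1) ^ 2 else 0) + hc (k - 1) ^ 2 * n c) * x ^ 2 ^ c := by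
      calc D k ^ 7 * x ^ 2 ^ (k + 2) = D k * (D k ^ 6 * x ^ 2 ^ (k + 2)) := by ring
        _ = D k * (∑ c ∈ Finset.range k, (if 1 ≤ c then hc (c - 1) ^ 2 else 0) * x ^ 2 ^ c)
            + hc (k - 1) ^ 2 * (D k * x ^ 2 ^ k) := by
            rw [s5, shiftSum k (by omega) (fun c => hc c ^ 2) x]; ring
        _ = _ := by
            rw [s1, Finset.mul_sum, Finset.mul_sum, ← Finset.sum_add_distrib]
            exact Finset.sum_congr rfl fun c _ => by ring
    have hB : ∑ c : Fin k, x ^ 2 ^ (c : ℕ) *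
        (D k * (if 1 ≤ (c : ℕ) then hc ((c : ℕ) - 1) ^ 2 else 0) + hc (k - 1) ^ 2 * n (c : ℕ)) =
        D k ^ 7 * x ^ 2 ^ (k + 2) := by
      rw [Fin.sum_univ_eq_sum_range (fun c => x ^ 2 ^ c *
        (D k * (if 1 ≤ c then hc (c - 1) ^ 2 else 0) + hc (k - 1) ^ 2 * n c)) k, s7]
      exact Finset.sum_congr rfl fun c _ => by ring
    have goal2 : ∑ c : Fin k, (x ^ 2 ^ (c : ℕ) * (D k ^ 6 * N k (k + 2) (c : ℕ)) +
        x ^ 2 ^ (c : ℕ) * ((D k * if 1 ≤ (c : ℕ) then hc ((c : ℕ) - 1) ^ 2 else 0) +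
          hc (k - 1) ^ 2 * n (c : ℕ))) = 0 := by
      rw [Finset.sum_add_distrib, hA, hB]
      exact CharTwo.add_self_eq_zero _
    exact (Finset.sum_congr rfl fun c _ => mul_add _ _ _).trans goal2
  -- use key at j
  have hjk : j < k := by omega
  have keyj : D k ^ 6 * N k (k + 2) j +
      (D k * (if 1 ≤ j then hc (j - 1) ^ 2 else 0) + hc (k - 1) ^ 2 * n j) = 0 :=
    key ⟨j, hjk⟩
  rw [CharTwo.add_eq_iff_eq_add, zero_add] at keyj
  have hck1 : hc (k - 1) ^ 2 = D k ^ 2 * n (k - 2) ^ 4 + n (k - 1) ^ 6 := by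
    have e1 : k - 1 - 1 = k - 2 := by omega
    simp only [hh, if_pos (by omega : 1 ≤ k - 1), e1]
    rw [CharTwo.add_sq]; ring
  rw [mul_comm, keyj, hck1]
  rcases Nat.lt_or_ge j 1 with hj0 | hj1
  · have hj' : j = 0 := by omega
    subst hj'
    simp only [if_neg (by omega : ¬ (1:ℕ) ≤ 0), if_neg (by omega : ¬ (2:ℕ) ≤ 0)]
    simp only [hn]
    ring
  · rcases Nat.lt_or_ge j 2 with hj1' | hj2
    · have hj' : j = 1 := by omega
      subst hj'
      have hc0 : hc 0 ^ 2 = n (k - 1) ^ 4 * n 0 ^ 2 := by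
        simp only [hh, if_neg (by omega : ¬ (1:ℕ) ≤ 0)]
        rw [mul_zero, zero_add, mul_pow]; ring
      simp only [if_pos (le_refl 1), if_neg (by omega : ¬ (2:ℕ) ≤ 1)]
      rw [show (1:ℕ) - 1 = 0 from rfl, hc0]
      simp only [hn]
      ring
    · have hcj : hc (j - 1) ^ 2 = D k ^ 2 * n (j - 2) ^ 4 + n (k - 1) ^ 4 * n (j - 1) ^ 2 := by
        have e1 : j - 1 - 1 = j - 2 := by omega
        simp only [hh, if_pos (by omega : 1 ≤ j - 1), e1]
        rw [CharTwo.add_sq]; ring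
      simp only [if_pos hj1, if_pos hj2, hcj]
      simp only [hn]
      ring
end
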